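/- Let A be a commutative ring with a multi-center {[M_i, a_i]}_{i∈I} and let A' = A[{M_i/a_i}_{i∈I}] be its dilatation, realized as a sub-A-algebra of S⁻¹A. If χ : A → B is a ring homomorphism such that for every i ∈ I the element χ(a_i) is a non-zero-divisor in B and the ideal of B generated by χ(M_i) ∪ {χ(a_i)} equals the principal ideal generated by χ(a_i), then there exists a unique A-algebra homomorphism χ' : A' → B; it sends the fraction λ(m)·λ(a_i)⁻¹ (for m ∈ M_i) to the unique element b ∈ B with χ(a_i)·b = χ(m). -/

import Mathlib

/-- The multi-centered dilatation `A[{M_i/a_i}]` of a commutative ring `A` with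
multi-center `{[M_i, a_i]}_{i ∈ I}`, realized as the sub-`A`-algebra of `S⁻¹A`
(where `S` is the multiplicative submonoid generated by the `a_i`) generated by
the fractions `λ(m)·λ(a_i)⁻¹` for `i ∈ I` and `m ∈ M_i`. -/
noncomputable def dilatation {A : Type*} [CommRing A] {I : Type*} (M : I → Ideal A) (a : I → A) :
    Subalgebra A (Localization (Submonoid.closure (Set.range a))) :=
  Algebra.adjoin A {x | ∃ i, ∃ m ∈ M i,
    x = algebraMap A (Localization (Submonoid.closure (Set.range a))) m *
        Ring.inverse (algebraMap A (Localization (Submonoid.closure (Set.range a))) (a i))}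

theorem adjoin_induction'_port {R A : Type*} [CommSemiring R] [Semiring A] [Algebra R A]
    {s : Set A} {p : Algebra.adjoin R s → Prop}
    (mem : ∀ (x) (h : x ∈ s), p ⟨x, Algebra.subset_adjoin h⟩)
    (algebraMap : ∀ r, p (algebraMap R _ r)) (add : ∀ x y, p x → p y → p (x + y))
    (mul : ∀ x y, p x → p y → p (x * y)) (x : Algebra.adjoin R s) : p x := by
  obtain ⟨x, hx⟩ := x
  induction hx using Algebra.adjoin_induction with
  | mem x h => exact mem x h
  | algebraMap r => exact algebraMap r
  | add x y hx hy ihx ihy => exact add _ _ ihx ihy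
  | mul x y hx hy ihx ihy => exact mul _ _ ihx ihy

/-- Universal property of the multi-centered dilatation: if `χ = algebraMap A B` sends each
`a_i` to a non-zero-divisor of `B` generating the ideal generated by `χ(M_i) ∪ {χ(a_i)}`,
then there is a unique `A`-algebra map `χ' : A[{M_i/a_i}] → B`, and it sends the fraction
`λ(m)·λ(a_i)⁻¹` (for `m ∈ M_i`) to the unique `b ∈ B` with `χ(a_i)·b = χ(m)`. -/
theorem dilatation_universal_property {A B : Type*} [CommRing A] [CommRing B] [Algebra A B]
    {I : Type*} (M : I → Ideal A) (a : I → A)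
    (hreg : ∀ i, algebraMap A B (a i) ∈ nonZeroDivisors B)
    (hgen : ∀ i, Ideal.span ((algebraMap A B) '' (M i) ∪ {algebraMap A B (a i)}) =
      Ideal.span {algebraMap A B (a i)}) :
    ∃ χ' : dilatation M a →ₐ[A] B,
      (∀ ψ : dilatation M a →ₐ[A] B, ψ = χ') ∧
      ∀ i, ∀ m ∈ M i, ∀ x : dilatation M a,
        (x : Localization (Submonoid.closure (Set.range a))) =
          algebraMap A (Localization (Submonoid.closure (Set.range a))) m *
            Ring.inverse (algebraMap A (Localization (Submonoid.closure (Set.range a))) (a i)) →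
        algebraMap A B (a i) * χ' x = algebraMap A B m := by
  classical
  set S : Submonoid A := Submonoid.closure (Set.range a) with hSdef
  set L : Type _ := Localization S with hLdef
  set χ : A →+* B := algebraMap A B with hχdef
  -- every element of S maps to a non-zero-divisor of B
  have hSreg : ∀ s ∈ S, χ s ∈ nonZeroDivisors B := by
    intro s hs
    have : S ≤ Submonoid.comap (χ : A →* B) (nonZeroDivisors B) := by
      rw [hSdef]
      apply Submonoid.closure_le.2
      rintro _ ⟨i, rfl⟩
      exact hreg i
    exact this hs
  set T : Submonoid B := S.map χ with hTdef
  have hT : T ≤ nonZeroDivisors B := by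
    rintro b ⟨s, hs, rfl⟩
    exact hSreg s hs
  set L' : Type _ := Localization T with hL'def
  set ι : B →+* L' := algebraMap B L' with hιdef
  have hinj : Function.Injective ι := IsLocalization.injective L' hT
  have halg : ∀ r : A, algebraMap A L' r = ι (χ r) := fun r => rfl
  haveI : IsScalarTower A B L' := IsScalarTower.of_algebraMap_eq halg
  have hunit : ∀ s : S, IsUnit ((ι.comp χ) s) := fun s =>
    IsLocalization.map_units (M := T) L' ⟨χ s, Submonoid.mem_map.2 ⟨s, s.2, rfl⟩⟩
  set F : L →+* L' := IsLocalization.lift hunit with hFdef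
  have hFalg : ∀ r : A, F (algebraMap A L r) = ι (χ r) := fun r =>
    IsLocalization.lift_eq hunit r
  set f' : L →ₐ[A] L' := { F with commutes' := fun r => hFalg r } with hf'def
  have haiu : ∀ i, IsUnit (algebraMap A L (a i)) := fun i =>
    IsLocalization.map_units (M := S) L ⟨a i, Submonoid.subset_closure ⟨i, rfl⟩⟩
  have hkey : ∀ i (m : A) (x : L),
      x = algebraMap A L m * Ring.inverse (algebraMap A L (a i)) →
      algebraMap A L (a i) * x = algebraMap A L m := by
    intro i m x hx
    rw [hx, mul_left_comm, Ring.mul_inverse_cancel _ (haiu i), mul_one]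
  set R' : Subalgebra A L' := (IsScalarTower.toAlgHom A B L').range with hR'def
  have hle : dilatation M a ≤ R'.comap f' := by
    apply Algebra.adjoin_le
    rintro x ⟨i, m, hm, hx⟩
    have hmspan : χ m ∈ Ideal.span {χ (a i)} := by
      rw [← hgen i]
      exact Ideal.subset_span (Or.inl ⟨m, hm, rfl⟩)
    obtain ⟨b, hb⟩ := Ideal.mem_span_singleton'.1 hmspan
    have h1 : algebraMap A L (a i) * x = algebraMap A L m := hkey i m x hx
    have h2 : ι (χ (a i)) * F x = ι (χ m) := by
      rw [← hFalg, ← hFalg, ← map_mul, h1]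
    have hu' : IsUnit (ι (χ (a i))) :=
      IsLocalization.map_units (M := T) L' ⟨χ (a i), Submonoid.mem_map.2 ⟨a i, Submonoid.subset_closure ⟨i, rfl⟩, rfl⟩⟩
    have h3 : F x = ι b := by
      apply hu'.mul_left_cancel
      rw [h2, ← hb, map_mul, mul_comm (ι b)]
    exact ⟨b, h3.symm⟩
  set g : dilatation M a →ₐ[A] R' :=
    (f'.comp (dilatation M a).val).codRestrict R' (fun x => hle x.2) with hgdef
  set e : B ≃ₐ[A] R' := AlgEquiv.ofInjective (IsScalarTower.toAlgHom A B L') hinj with hedef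
  set χ' : dilatation M a →ₐ[A] B := (e.symm : R' →ₐ[A] B).comp g with hχ'def
  -- the formula holds for any A-algebra hom
  have hformula : ∀ (ψ : dilatation M a →ₐ[A] B) i (m : A), m ∈ M i →
      ∀ x : dilatation M a,
      (x : L) = algebraMap A L m * Ring.inverse (algebraMap A L (a i)) →
      χ (a i) * ψ x = χ m := by
    intro ψ i m _hm x hx
    have h1 : algebraMap A L (a i) * (x : L) = algebraMap A L m := hkey i m x hx
    have h2 : algebraMap A (dilatation M a) (a i) * x = algebraMap A (dilatation M a) m := by
      apply Subtype.ext
      push_cast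
      simpa using h1
    calc χ (a i) * ψ x = ψ (algebraMap A (dilatation M a) (a i) * x) := by
          rw [map_mul, AlgHom.commutes]
      _ = ψ (algebraMap A (dilatation M a) m) := by rw [h2]
      _ = χ m := AlgHom.commutes ψ m
  refine ⟨χ', ?_, fun i m hm x hx => hformula χ' i m hm x hx⟩
  intro ψ
  ext x
  induction x using adjoin_induction'_port with
  | mem x hx =>
    have hmem : x ∈ dilatation M a := Algebra.subset_adjoin hx
    obtain ⟨i, m, hm, hx'⟩ := hx
    have h1 := hformula ψ i m hm ⟨x, hmem⟩ hx'
    have h2 := hformula χ' i m hm ⟨x, hmem⟩ hx'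
    exact (mul_cancel_left_mem_nonZeroDivisors (hreg i)).1 (h1.trans h2.symm)
  | algebraMap r => exact (ψ.commutes r).trans (χ'.commutes r).symm
  | add x y hx hy => exact (map_add ψ x y).trans ((congrArg₂ (· + ·) hx hy).trans (map_add χ' x y).symm)
  | mul x y hx hy => exact (map_mul ψ x y).trans ((congrArg₂ (· * ·) hx hy).trans (map_mul χ' x y).symm)
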